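/- For an index coding problem with side information hypergraph H over F_q and δ errors to correct, the optimal length N_q[H, δ] of a linear δ-error-correcting index code satisfies N_q[α(H), 2δ+1] ≤ N_q[H, δ] ≤ N_q[κ_q(H), 2δ+1]; consequently, if α(H) = κ_q(H), then N_q[H, δ] = N_q[α(H), 2δ+1]. -/

import Mathlib

/-- `N_q[k, dist]`: the shortest length of a linear code over `F` of dimension `k` and
minimum Hamming distance (at least) `dist`. -/
noncomputable def Nq (F : Type*) [Field F] [DecidableEq F] (k dist : ℕ) : ℕ :=
  sInf {n : ℕ | ∃ C : Submodule F (Fin n → F),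
    Module.finrank F C = k ∧ ∀ c ∈ C, c ≠ 0 → dist ≤ hammingNorm c}

/-- The collection `J(H)` of an index coding problem: sets of the form `{f i} ∪ Y` with
`Y ⊆ [n] \ ({f i} ∪ X i)`. -/
def Jset {n K : ℕ} (X : Fin K → Finset (Fin n)) (f : Fin K → Fin n) :
    Set (Finset (Fin n)) :=
  {T | T.Nonempty ∧ ∃ i, f i ∈ T ∧ ∀ j ∈ T, j ≠ f i → j ∉ X i}

/-- The generalized independence number `α(H)`. -/
noncomputable def alphaH {n K : ℕ} (X : Fin K → Finset (Fin n)) (f : Fin K → Fin n) : ℕ :=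
  sSup {c : ℕ | ∃ S : Finset (Fin n),
    (∀ T ⊆ S, T.Nonempty → T ∈ Jset X f) ∧ c = S.card}

/-- The min-rank `κ_q(H)`. -/
noncomputable def kappaH (F : Type*) [Field F] {n K : ℕ}
    (X : Fin K → Finset (Fin n)) (f : Fin K → Fin n) : ℕ :=
  sInf {c : ℕ | ∃ V : Fin K → Fin n → F,
    (∀ i j, V i j ≠ 0 → j ∈ X i) ∧
    c = Module.finrank F (Submodule.span F
      (Set.range fun i => V i + Pi.single (f i) (1 : F)))}

/-- `N_q[H, δ]`: the optimal length of a linear `δ`-error-correcting index code,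
via the characterization that all relevant linear combinations of the rows have
Hamming weight at least `2δ+1`. -/
noncomputable def NH (F : Type*) [Field F] [DecidableEq F] {n K : ℕ}
    (X : Fin K → Finset (Fin n)) (f : Fin K → Fin n) (δ : ℕ) : ℕ :=
  sInf {len : ℕ | ∃ L : Matrix (Fin n) (Fin len) F,
    ∀ T ∈ Jset X f, ∀ z : Fin n → F, (∀ i ∈ T, z i ≠ 0) →
      2 * δ + 1 ≤ hammingNorm (∑ i ∈ T, z i • L i)}

section Helpers

variable {F : Type*} [Field F] [DecidableEq F]

/-- Index map for the repetition code. -/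
def repIdx (k d : ℕ) (j : Fin (k * d)) : Fin k :=
  ⟨j.val / d, by
    rcases Nat.eq_zero_or_pos d with h | h
    · exact absurd j.isLt (by simp [h])
    · exact Nat.div_lt_of_lt_mul (Nat.lt_of_lt_of_le j.isLt (Nat.le_of_eq (Nat.mul_comm k d)))⟩

lemma repIdx_surj (k d : ℕ) (hd : 0 < d) : Function.Surjective (repIdx k d) := by
  intro i
  refine ⟨⟨i.val * d, (Nat.mul_lt_mul_right hd).mpr i.isLt⟩, ?_⟩
  simp only [repIdx]
  exact Fin.ext (by simp [Nat.mul_div_cancel _ hd])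

lemma rep_norm {k d : ℕ} (hd : 0 < d) (z : Fin k → F) (hz : z ≠ 0) :
    d ≤ hammingNorm (z ∘ repIdx k d) := by
  obtain ⟨i, hi⟩ := Function.ne_iff.mp hz
  have hlt : ∀ t : Fin d, i.val * d + t.val < k * d := by
    intro t
    have h1 : i.val * d + t.val < (i.val + 1) * d := by
      rw [add_mul, one_mul]; omega
    exact lt_of_lt_of_le h1 (Nat.mul_le_mul_right d i.isLt)
  set ι : Fin d → Fin (k * d) := fun t => ⟨i.val * d + t.val, hlt t⟩ with hι
  have hval : ∀ t : Fin d, repIdx k d (ι t) = i := by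
    intro t
    apply Fin.ext
    simp only [repIdx, ι]
    rw [add_comm, Nat.add_mul_div_right _ _ hd, Nat.div_eq_of_lt t.isLt, zero_add]
  show d ≤ (Finset.univ.filter fun j => (z ∘ repIdx k d) j ≠ 0).card
  have hcard := Finset.card_le_card_of_injOn
    (s := (Finset.univ : Finset (Fin d)))
    (t := Finset.univ.filter fun j => (z ∘ repIdx k d) j ≠ 0) ι ?_ ?_
  · simpa using hcard
  · intro t _
    simp only [Finset.mem_filter, Finset.mem_univ, true_and, Function.comp_apply, hval t]
    simpa [hval t] using hi
  · intro a _ b _ h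
    have := congrArg Fin.val h
    simp only [ι] at this
    exact Fin.ext (by omega)

lemma nq_set_nonempty (F : Type*) [Field F] [DecidableEq F] (k d : ℕ) (hd : 0 < d) :
    {m : ℕ | ∃ C : Submodule F (Fin m → F),
      Module.finrank F C = k ∧ ∀ c ∈ C, c ≠ 0 → d ≤ hammingNorm c}.Nonempty := by
  refine ⟨k * d, LinearMap.range (LinearMap.funLeft F F (repIdx k d)), ?_, ?_⟩
  · rw [LinearMap.finrank_range_of_inj
      (LinearMap.funLeft_injective_of_surjective F F _ (repIdx_surj k d hd))]
    exact Module.finrank_fin_fun F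
  · rintro c ⟨z, rfl⟩ hc
    have hz : z ≠ 0 := by
      rintro rfl; exact hc (by simp [LinearMap.funLeft])
    exact rep_norm hd z hz

lemma nh_set_nonempty {n K : ℕ} (X : Fin K → Finset (Fin n)) (f : Fin K → Fin n) (δ : ℕ) :
    {len : ℕ | ∃ L : Matrix (Fin n) (Fin len) F,
      ∀ T ∈ Jset X f, ∀ z : Fin n → F, (∀ i ∈ T, z i ≠ 0) →
        2 * δ + 1 ≤ hammingNorm (∑ i ∈ T, z i • L i)}.Nonempty := by
  classical
  set d := 2 * δ + 1 with hd
  refine ⟨n * d, fun i => (Pi.single i (1 : F)) ∘ repIdx n d, ?_⟩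
  rintro T ⟨hTne, _⟩ z hz
  set w : Fin n → F := fun x => if x ∈ T then z x else 0 with hw
  have hsum : (∑ i ∈ T, z i • ((Pi.single i (1 : F)) ∘ repIdx n d)) = w ∘ repIdx n d := by
    funext j
    simp only [Finset.sum_apply, Pi.smul_apply, Function.comp_apply, smul_eq_mul, hw,
      Pi.single_apply]
    rw [Finset.sum_congr rfl (fun i _ => by rw [mul_ite, mul_one, mul_zero])]
    exact Finset.sum_ite_eq T (repIdx n d j) z
  rw [hsum]
  apply rep_norm (by omega)
  obtain ⟨i₀, hi₀⟩ := hTne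
  intro h0
  exact hz i₀ hi₀ (by simpa [hw, hi₀] using congrFun h0 i₀)

lemma alpha_bound {n K : ℕ} (X : Fin K → Finset (Fin n)) (f : Fin K → Fin n) (δ : ℕ) :
    Nq F (alphaH X f) (2 * δ + 1) ≤ NH F X f δ := by
  classical
  obtain ⟨S, hS, hcard⟩ : ∃ S : Finset (Fin n),
      (∀ T ⊆ S, T.Nonempty → T ∈ Jset X f) ∧ alphaH X f = S.card := by
    have hne : {c : ℕ | ∃ S : Finset (Fin n),
        (∀ T ⊆ S, T.Nonempty → T ∈ Jset X f) ∧ c = S.card}.Nonempty :=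
      ⟨0, ∅, fun T hT hTne => absurd (Finset.subset_empty.mp hT ▸ hTne) (by simp), by simp⟩
    have hbdd : BddAbove {c : ℕ | ∃ S : Finset (Fin n),
        (∀ T ⊆ S, T.Nonempty → T ∈ Jset X f) ∧ c = S.card} :=
      ⟨n, by rintro c ⟨S, _, rfl⟩; simpa using Finset.card_le_univ S⟩
    exact Nat.sSup_mem hne hbdd
  refine le_csInf (nh_set_nonempty X f δ) ?_
  rintro len ⟨L, hL⟩
  apply Nat.sInf_le
  have key : ∀ z : {x // x ∈ S} → F, z ≠ 0 →
      2 * δ + 1 ≤ hammingNorm (∑ i : {x // x ∈ S}, z i • L i.val) := by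
    intro z hz
    set z' : Fin n → F := fun i => if h : i ∈ S then z ⟨i, h⟩ else 0 with hz'
    set T := S.filter (fun i => z' i ≠ 0) with hT
    have hTsub : T ⊆ S := Finset.filter_subset _ _
    have hsum : (∑ i : {x // x ∈ S}, z i • L i.val) = ∑ i ∈ T, z' i • L i := by
      have h1 : (∑ i : {x // x ∈ S}, z i • L i.val) = ∑ i ∈ S, z' i • L i := by
        rw [← Finset.sum_attach S (fun i => z' i • L i)]
        refine Finset.sum_congr rfl (fun i _ => ?_)
        simp [hz', i.2]
      rw [h1]
      refine (Finset.sum_subset hTsub (fun x hxS hxT => ?_)).symm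
      have hx0 : ¬ z' x ≠ 0 := fun h => hxT (Finset.mem_filter.mpr ⟨hxS, h⟩)
      rw [not_not.mp hx0, zero_smul]
    obtain ⟨i, hi⟩ := Function.ne_iff.mp hz
    have hTne : T.Nonempty :=
      ⟨i.val, Finset.mem_filter.mpr ⟨i.2, by simpa [hz', i.2] using hi⟩⟩
    rw [hsum]
    exact hL T (hS T hTsub hTne) z' (fun j hj => (Finset.mem_filter.mp hj).2)
  refine ⟨Submodule.span F (Set.range fun i : {x // x ∈ S} => L i.val), ?_, ?_⟩
  · have hli : LinearIndependent F (fun i : {x // x ∈ S} => L i.val) := by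
      rw [Fintype.linearIndependent_iff]
      intro g hg i
      by_contra hgi
      have hgne : g ≠ 0 := fun h => hgi (congrFun h i)
      have h2 := key g hgne
      rw [hg] at h2
      simp [hammingNorm_eq_zero] at h2
    rw [finrank_span_eq_card hli, Fintype.card_coe, hcard]
  · intro c hc hcne
    rw [Submodule.mem_span_range_iff_exists_fun] at hc
    obtain ⟨g, rfl⟩ := hc
    exact key g (fun h => hcne (by rw [h]; simp))

set_option maxHeartbeats 1000000 in
lemma kappa_bound {n K : ℕ} (X : Fin K → Finset (Fin n)) (f : Fin K → Fin n)
    (hf : ∀ i, f i ∉ X i) (δ : ℕ) :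
    NH F X f δ ≤ Nq F (kappaH F X f) (2 * δ + 1) := by
  classical
  have hne0 : ({c : ℕ | ∃ V : Fin K → Fin n → F,
      (∀ i j, V i j ≠ 0 → j ∈ X i) ∧
      c = Module.finrank F (Submodule.span F
        (Set.range fun i => V i + Pi.single (f i) (1 : F)))} : Set ℕ).Nonempty := by
    refine ⟨_, ⟨fun _ => 0, fun i j h => absurd rfl h, rfl⟩⟩
  obtain ⟨V, hV, hκ0⟩ := Nat.sInf_mem hne0
  have hκ : kappaH F X f = Module.finrank F (Submodule.span F
      (Set.range fun i => V i + Pi.single (f i) (1 : F))) := hκ0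
  set κ := kappaH F X f with hκdef
  set N := Nq F κ (2 * δ + 1) with hN
  obtain ⟨C, hCr, hCw⟩ : ∃ C : Submodule F (Fin N → F),
      Module.finrank F C = κ ∧ ∀ c ∈ C, c ≠ 0 → 2 * δ + 1 ≤ hammingNorm c :=
    Nat.sInf_mem (nq_set_nonempty F κ (2 * δ + 1) (Nat.succ_pos (2 * δ)))
  set w : Fin K → Fin n → F := fun i => V i + Pi.single (f i) 1 with hwdef
  set W := Submodule.span F (Set.range w) with hWdef
  let b : Module.Basis (Fin κ) F W := (Module.finBasis F W).reindex (finCongr hκ.symm)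
  let g : Module.Basis (Fin κ) F C := (Module.finBasis F C).reindex (finCongr hCr)
  apply Nat.sInf_le
  refine ⟨fun i j => ∑ m, (b m : Fin n → F) i * (g m : Fin N → F) j, ?_⟩
  rintro T ⟨hTne, i₀, hfT, hXT⟩ z hz
  set u : Fin n → F := fun i => if i ∈ T then z i else 0 with hu
  set c : Fin κ → F := fun m => ∑ i, u i * (b m : Fin n → F) i with hc
  let φ : (Fin n → F) →ₗ[F] F :=
    { toFun := fun v => ∑ i, u i * v i
      map_add' := fun a b' => by simp [mul_add, Finset.sum_add_distrib]
      map_smul' := fun r a => by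
        simp only [smul_eq_mul, RingHom.id_apply, Pi.smul_apply]
        rw [Finset.mul_sum]
        exact Finset.sum_congr rfl fun i _ => by ring }
  have hφw : φ (w i₀) = z (f i₀) := by
    have h1 : ∀ i, u i * w i₀ i = (if i = f i₀ then u i else 0) := by
      intro i
      by_cases hiT : i ∈ T
      · by_cases hif : i = f i₀
        · have hV0 : V i₀ (f i₀) = 0 := by
            by_contra h; exact hf i₀ (hV i₀ (f i₀) h)
          simp [hwdef, hif, hV0, Pi.single_apply]
        · have hV0 : V i₀ i = 0 := by
            by_contra h; exact hXT i hiT hif (hV i₀ i h)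
          simp [hwdef, hV0, Pi.single_apply, hif]
      · simp [hu, hiT]
    have h2 : φ (w i₀) = ∑ i, u i * w i₀ i := rfl
    rw [h2, Finset.sum_congr rfl (fun i _ => h1 i),
      Finset.sum_ite_eq' Finset.univ (f i₀) u]
    simp [hu, hfT]
  have hcne : c ≠ 0 := by
    intro hc0
    have hφb : ∀ m, φ (b m : Fin n → F) = 0 := fun m => by
      exact congrFun hc0 m
    have hφW : ∀ v : W, φ (v : Fin n → F) = 0 := by
      intro v
      have hrep : (v : Fin n → F) = ∑ m, b.repr v m • ((b m : W) : Fin n → F) := by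
        conv_lhs => rw [← b.sum_repr v]
        rw [Submodule.coe_sum]; rfl
      rw [hrep, map_sum]
      simp [hφb]
    have hwi₀ : w i₀ ∈ W := Submodule.subset_span ⟨i₀, rfl⟩
    have h0 := hφW ⟨w i₀, hwi₀⟩
    rw [Submodule.coe_mk, hφw] at h0
    exact hz (f i₀) hfT h0
  set cv : C := ∑ m, c m • g m with hcv
  have hcvne : cv ≠ 0 := by
    intro h0
    obtain ⟨m, hm⟩ := Function.ne_iff.mp hcne
    exact hm (Fintype.linearIndependent_iff.mp g.linearIndependent c (by rw [← hcv, h0]) m)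
  have hnorm : 2 * δ + 1 ≤ hammingNorm (cv : Fin N → F) :=
    hCw cv.val cv.2 (fun h => hcvne (Subtype.ext h))
  have hceq : ∀ m, c m = ∑ i ∈ T, z i * (b m : Fin n → F) i := by
    intro m
    have h3 : ∀ i, u i * (b m : Fin n → F) i
        = if i ∈ T then z i * (b m : Fin n → F) i else 0 := by
      intro i; by_cases h : i ∈ T <;> simp [hu, h]
    rw [show c m = ∑ i, u i * (b m : Fin n → F) i from rfl,
      Finset.sum_congr rfl (fun i _ => h3 i), Finset.sum_ite_mem, Finset.univ_inter]
  have heq : (∑ i ∈ T, z i •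
      (fun j => ∑ m, (b m : Fin n → F) i * (g m : Fin N → F) j)) = (cv : Fin N → F) := by
    funext j
    have h2 : (cv : Fin N → F) j = ∑ m, c m * (g m : Fin N → F) j := by
      rw [hcv]
      simp
    rw [h2]
    have h1 : (∑ i ∈ T, z i •
        (fun j => ∑ m, (b m : Fin n → F) i * (g m : Fin N → F) j)) j
        = ∑ i ∈ T, z i * ∑ m, (b m : Fin n → F) i * (g m : Fin N → F) j := by
      simp
    rw [h1]
    calc ∑ i ∈ T, z i * ∑ m, (b m : Fin n → F) i * (g m : Fin N → F) j
        = ∑ i ∈ T, ∑ m, z i * (b m : Fin n → F) i * (g m : Fin N → F) j := by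
          refine Finset.sum_congr rfl fun i _ => ?_
          rw [Finset.mul_sum]
          exact Finset.sum_congr rfl fun m _ => by ring
      _ = ∑ m, ∑ i ∈ T, z i * (b m : Fin n → F) i * (g m : Fin N → F) j :=
          Finset.sum_comm
      _ = ∑ m, c m * (g m : Fin N → F) j := by
          refine Finset.sum_congr rfl fun m _ => ?_
          rw [hceq m, Finset.sum_mul]
  rw [heq]
  exact hnorm

end Helpers

/-- The α-bound and κ-bound on the optimal length of a `δ`-error-correcting index code,
and their coincidence when `α(H) = κ_q(H)`. -/
theorem stmt7 {F : Type*} [Field F] [DecidableEq F] {n K : ℕ}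
    (X : Fin K → Finset (Fin n)) (f : Fin K → Fin n) (hf : ∀ i, f i ∉ X i)
    (δ : ℕ) :
    Nq F (alphaH X f) (2 * δ + 1) ≤ NH F X f δ ∧
    NH F X f δ ≤ Nq F (kappaH F X f) (2 * δ + 1) ∧
    (alphaH X f = kappaH F X f → NH F X f δ = Nq F (alphaH X f) (2 * δ + 1)) := by
  refine ⟨alpha_bound X f δ, kappa_bound X f hf δ, fun h => ?_⟩
  exact le_antisymm (h ▸ kappa_bound X f hf δ) (alpha_bound X f δ)
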